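/- Let d : ℝ → ℝ be continuous, positive, ω-periodic, f : ℝ → ℝ continuous, ω-periodic and nonnegative, D(ω) = ∫₀^ω d, and (Φx)(t) = (exp(D(ω))-1)⁻¹ ∫ₜ^{t+ω} exp(∫ₜ^s d)·f(s) ds. Set C := (exp(D(ω))-1)⁻¹ ∫₀^ω f(s) ds. Then C ≤ (Φx)(t) ≤ exp(D(ω))·C for all t, and hence (Φx)(t) ≥ exp(-D(ω))·max_{s∈[0,ω]}(Φx)(s) for all t. -/

import Mathlib

theorem stmt_12 (ω : ℝ) (hω : 0 < ω) (d f : ℝ → ℝ)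
    (hd : Continuous d) (hdpos : ∀ t, 0 < d t) (hdper : Function.Periodic d ω)
    (hf : Continuous f) (hfper : Function.Periodic f ω) (hfnn : ∀ t, 0 ≤ f t)
    (D Cst : ℝ) (hD : D = ∫ s in (0:ℝ)..ω, d s)
    (hC : Cst = (Real.exp D - 1)⁻¹ * ∫ s in (0:ℝ)..ω, f s)
    (Φ : ℝ → ℝ)
    (hΦ : ∀ t, Φ t = (Real.exp D - 1)⁻¹ *
      ∫ s in t..(t + ω), Real.exp (∫ r in t..s, d r) * f s) :
    (∀ t, Cst ≤ Φ t ∧ Φ t ≤ Real.exp D * Cst) ∧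
    (∀ t, Real.exp (-D) * sSup (Φ '' Set.Icc 0 ω) ≤ Φ t) := by
  have hDpos : 0 < D := by
    rw [hD]
    exact intervalIntegral.intervalIntegral_pos_of_pos (hd.intervalIntegrable 0 ω)
      (fun x => hdpos x) hω
  have hcpos : 0 < Real.exp D - 1 := by
    nlinarith [Real.add_one_le_exp D]
  have hkey : ∀ t, Cst ≤ Φ t ∧ Φ t ≤ Real.exp D * Cst := by
    intro t
    have hle : t ≤ t + ω := by linarith
    -- integrals
    have hintf : IntervalIntegrable f MeasureTheory.volume t (t + ω) :=
      hf.intervalIntegrable _ _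
    have hcont : Continuous (fun s => Real.exp (∫ r in t..s, d r) * f s) := by
      have : Continuous (fun s => ∫ r in t..s, d r) :=
        intervalIntegral.continuous_primitive (fun a b => hd.intervalIntegrable a b) t
      exact (Real.continuous_exp.comp this).mul hf
    have hintg : IntervalIntegrable (fun s => Real.exp (∫ r in t..s, d r) * f s)
        MeasureTheory.volume t (t + ω) := hcont.intervalIntegrable _ _
    -- f integral over the period
    have hper : (∫ s in t..(t + ω), f s) = ∫ s in (0:ℝ)..ω, f s := by
      have := hfper.intervalIntegral_add_eq t 0
      simpa using this
    -- exponent bounds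
    have hexp_lb : ∀ s ∈ Set.Icc t (t + ω), (1:ℝ) ≤ Real.exp (∫ r in t..s, d r) := by
      intro s hs
      apply Real.one_le_exp
      exact intervalIntegral.integral_nonneg hs.1 (fun r _ => (hdpos r).le)
    have hexp_ub : ∀ s ∈ Set.Icc t (t + ω), Real.exp (∫ r in t..s, d r) ≤ Real.exp D := by
      intro s hs
      apply Real.exp_le_exp.mpr
      have hDt : D = ∫ r in t..(t + ω), d r := by
        rw [hD]
        have := hdper.intervalIntegral_add_eq t 0
        simpa using this.symm
      rw [hDt]
      have hsplit : (∫ r in t..(t + ω), d r) =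
          (∫ r in t..s, d r) + ∫ r in s..(t + ω), d r :=
        (intervalIntegral.integral_add_adjacent_intervals
          (hd.intervalIntegrable _ _) (hd.intervalIntegrable _ _)).symm
      have hnn : 0 ≤ ∫ r in s..(t + ω), d r :=
        intervalIntegral.integral_nonneg hs.2 (fun r _ => (hdpos r).le)
      linarith
    have hlow : (∫ s in t..(t + ω), f s) ≤
        ∫ s in t..(t + ω), Real.exp (∫ r in t..s, d r) * f s := by
      apply intervalIntegral.integral_mono_on hle hintf hintg
      intro s hs
      nlinarith [hexp_lb s hs, hfnn s]
    have hhigh : (∫ s in t..(t + ω), Real.exp (∫ r in t..s, d r) * f s) ≤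
        ∫ s in t..(t + ω), Real.exp D * f s := by
      apply intervalIntegral.integral_mono_on hle hintg
        ((continuous_const.mul hf).intervalIntegrable _ _)
      intro s hs
      show Real.exp (∫ r in t..s, d r) * f s ≤ Real.exp D * f s
      nlinarith [hexp_ub s hs, hfnn s]
    rw [intervalIntegral.integral_const_mul, hper] at hhigh
    rw [hper] at hlow
    constructor
    · rw [hΦ, hC]
      exact mul_le_mul_of_nonneg_left hlow (inv_nonneg.mpr hcpos.le)
    · rw [hΦ, hC]
      rw [show Real.exp D * ((Real.exp D - 1)⁻¹ * ∫ s in (0:ℝ)..ω, f s)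
        = (Real.exp D - 1)⁻¹ * (Real.exp D * ∫ s in (0:ℝ)..ω, f s) by ring]
      exact mul_le_mul_of_nonneg_left hhigh (inv_nonneg.mpr hcpos.le)
  refine ⟨hkey, fun t => ?_⟩
  have hsup : sSup (Φ '' Set.Icc 0 ω) ≤ Real.exp D * Cst := by
    apply csSup_le
    · exact (Set.nonempty_Icc.mpr hω.le).image Φ
    · rintro x ⟨s, _, rfl⟩
      exact (hkey s).2
  calc Real.exp (-D) * sSup (Φ '' Set.Icc 0 ω)
      ≤ Real.exp (-D) * (Real.exp D * Cst) :=
        mul_le_mul_of_nonneg_left hsup (Real.exp_pos _).le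
    _ = Cst := by rw [← mul_assoc, ← Real.exp_add]; simp
    _ ≤ Φ t := (hkey t).1
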